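/- Let p ≥ 1 be an integer and θ > 0, let (x, λ, y) be a global solution of the closed-loop control system on [0, ∞) with λ nondecreasing, assume dom(A) = {z : A z ≠ ∅} is bounded, and assume 0 ∈ A z* for some z* ∈ H. For t > 0 define the ergodic iterate z̃(t) = (∫₀ᵗ λ(s) ds)^{-1} · ∫₀ᵗ λ(s) y(s) ds. Then: (a) for every z ∈ dom(A), every ξ ∈ A z, and every t > 0, ⟪ξ, z̃(t) − z⟫ ≤ ‖x(0) − z‖²/(2 ∫₀ᵗ λ(s) ds); and (b) there exists a constant C > 0 such that gap(z̃(t)) ≤ C·t^{−(p+1)/2} for all t > 0. -/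

import Mathlib

open scoped Pointwise
open RealInnerProductSpace Filter Topology Set Metric

/-- A solution of the closed-loop control system on the time set `T`:
`x` is continuously differentiable with `x'(t) = y(t) - x(t)`,
`y(t)` is the resolvent point `(I + λ(t)A)⁻¹ x(t)` (i.e. `x(t) - y(t) ∈ λ(t) • A (y t)`),
`λ` is continuous and positive, and the algebraic equation
`λ(t) ‖y(t) - x(t)‖^{p-1} = θ` holds. -/
def IsCLSolution {H : Type*} [NormedAddCommGroup H] [InnerProductSpace ℝ H]
    (A : H → Set H) (p : ℕ) (θ : ℝ) (T : Set ℝ)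
    (x : ℝ → H) (lam : ℝ → ℝ) (y : ℝ → H) : Prop :=
  (∀ t ∈ T, 0 < lam t) ∧ ContinuousOn lam T ∧
  (∀ t ∈ T, x t - y t ∈ lam t • A (y t)) ∧
  (∀ t ∈ T, HasDerivWithinAt x (y t - x t) T t) ∧
  ContinuousOn (fun t => y t - x t) T ∧
  (∀ t ∈ T, lam t * ‖y t - x t‖ ^ (p - 1) = θ)

open MeasureTheory in
lemma cl_aux_bound {H : Type*} [NormedAddCommGroup H] [InnerProductSpace ℝ H]
    (x y : ℝ → H) (z : H) (f : ℝ → ℝ)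
    (hx : ∀ s ∈ Ici (0:ℝ), HasDerivWithinAt x (y s - x s) (Ici 0) s)
    (hf : ContinuousOn f (Ici 0))
    (hle : ∀ s ∈ Ici (0:ℝ), f s + ⟪y s - x s, x s - z⟫ ≤ 0)
    {t : ℝ} (ht : 0 ≤ t) :
    ∫ s in (0:ℝ)..t, f s ≤ ‖x 0 - z‖ ^ 2 / 2 := by
  rcases eq_or_lt_of_le ht with rfl | ht
  · rw [intervalIntegral.integral_same]
    positivity
  set g : ℝ → ℝ := fun u => ⟪x u - z, x u - z⟫ / 2 + ∫ s in (0:ℝ)..u, f s with hgdef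
  have hxc : ContinuousOn x (Ici 0) := fun s hs => (hx s hs).continuousWithinAt
  have hfi : IntegrableOn f (uIcc (0:ℝ) t) := by
    rw [uIcc_of_le ht.le]
    exact (hf.mono Icc_subset_Ici_self).integrableOn_compact isCompact_Icc
  have hgc : ContinuousOn g (Icc 0 t) := by
    apply ContinuousOn.add
    · exact ((((hxc.mono Icc_subset_Ici_self).sub continuousOn_const).inner
        ((hxc.mono Icc_subset_Ici_self).sub continuousOn_const)).div_const 2)
    · have := intervalIntegral.continuousOn_primitive_interval (a := 0) (b := t) hfi
      rwa [uIcc_of_le ht.le] at this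
  have hderiv : ∀ s ∈ interior (Icc (0:ℝ) t),
      HasDerivWithinAt g (f s + ⟪y s - x s, x s - z⟫) (interior (Icc (0:ℝ) t)) s := by
    intro s hs
    rw [interior_Icc] at hs ⊢
    have hs0 : (0:ℝ) < s := hs.1
    have hmem : Ici (0:ℝ) ∈ 𝓝 s := Ici_mem_nhds hs0
    have hxd : HasDerivAt x (y s - x s) s := (hx s hs0.le).hasDerivAt hmem
    have h1 : HasDerivAt (fun u => ⟪x u - z, x u - z⟫ / 2) ⟪y s - x s, x s - z⟫ s := by
      have := ((hxd.sub_const z).inner ℝ (hxd.sub_const z)).div_const 2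
      refine this.congr_deriv ?_
      rw [real_inner_comm (x s - z) (y s - x s)]
      ring
    have h2 : HasDerivAt (fun u => ∫ s in (0:ℝ)..u, f s) (f s) s := by
      refine intervalIntegral.integral_hasDerivAt_right ?_ ?_ ?_
      · exact (hf.mono (by rw [uIcc_of_le hs0.le]; exact Icc_subset_Ici_self)).intervalIntegrable
      · exact (hf.mono Ioi_subset_Ici_self).stronglyMeasurableAtFilter isOpen_Ioi s hs.1
      · exact hf.continuousAt hmem
    have := h1.add h2
    rw [add_comm (⟪y s - x s, x s - z⟫)] at this
    exact this.hasDerivWithinAt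
  have hanti : AntitoneOn g (Icc 0 t) :=
    antitoneOn_of_hasDerivWithinAt_nonpos (convex_Icc 0 t) hgc hderiv
      (fun s hs => hle s (by rw [interior_Icc] at hs; exact hs.1.le))
  have hg0 : g t ≤ g 0 :=
    hanti (left_mem_Icc.2 ht.le) (right_mem_Icc.2 ht.le) ht.le
  have e0 : g 0 = ⟪x 0 - z, x 0 - z⟫ / 2 := by simp [hgdef]
  have et : g t = ⟪x t - z, x t - z⟫ / 2 + ∫ s in (0:ℝ)..t, f s := rfl
  rw [et, e0] at hg0
  have hnn : (0:ℝ) ≤ ⟪x t - z, x t - z⟫ := real_inner_self_nonneg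
  have hns : ⟪x 0 - z, x 0 - z⟫ = ‖x 0 - z‖ ^ 2 := real_inner_self_eq_norm_sq _
  linarith


/-- Ergodic rate: with `dom(A)` bounded, the ergodic iterate
`z̃(t) = (∫₀ᵗ λ)⁻¹ ∫₀ᵗ λ(s) y(s) ds` satisfies, for every `z ∈ dom(A)`, `ξ ∈ A z`,
`⟪ξ, z̃(t) - z⟫ ≤ ‖x(0) - z‖²/(2∫₀ᵗ λ)`, and `gap(z̃(t)) = O(t^{-(p+1)/2})`. -/
theorem stmt_13 {H : Type*} [NormedAddCommGroup H] [InnerProductSpace ℝ H] [CompleteSpace H]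
    (A : H → Set H)
    (hmono : ∀ x y u v : H, u ∈ A x → v ∈ A y → 0 ≤ ⟪u - v, x - y⟫)
    (p : ℕ) (hp : 1 ≤ p) (θ : ℝ) (hθ : 0 < θ)
    (x : ℝ → H) (lam : ℝ → ℝ) (y : ℝ → H)
    (hsol : IsCLSolution A p θ (Ici 0) x lam y)
    (hlam : MonotoneOn lam (Ici 0))
    (hbdd : Bornology.IsBounded {z : H | (A z).Nonempty})
    (hzero : ∃ z : H, 0 ∈ A z) :
    (∀ z ξ : H, ξ ∈ A z → ∀ t : ℝ, 0 < t →
        ⟪ξ, ((∫ s in (0 : ℝ)..t, lam s)⁻¹ • ∫ s in (0 : ℝ)..t, lam s • y s) - z⟫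
          ≤ ‖x 0 - z‖ ^ 2 / (2 * ∫ s in (0 : ℝ)..t, lam s))
    ∧ ∃ C : ℝ, 0 < C ∧ ∀ t : ℝ, 0 < t →
        sSup {r : ℝ | ∃ z ξ : H, ξ ∈ A z ∧
            r = ⟪ξ, ((∫ s in (0 : ℝ)..t, lam s)⁻¹ • ∫ s in (0 : ℝ)..t, lam s • y s) - z⟫}
          ≤ C * t ^ (-(((p : ℝ) + 1) / 2)) := by
  obtain ⟨hpos, hlamc, hres, hderiv, hymx, heq⟩ := hsol
  obtain ⟨zs, hzs⟩ := hzero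
  have hxc : ContinuousOn x (Ici 0) := fun s hs => (hderiv s hs).continuousWithinAt
  have hyc : ContinuousOn y (Ici 0) := by
    have := hymx.add hxc
    refine this.congr (fun s _ => ?_)
    simp
  -- key pointwise inequality
  have key : ∀ z ξ : H, ξ ∈ A z → ∀ s ∈ Ici (0:ℝ),
      lam s * ⟪ξ, y s - z⟫ + (‖y s - x s‖ ^ 2 + ⟪y s - x s, x s - z⟫) ≤ 0 := by
    intro z ξ hξ s hs
    obtain ⟨a, ha, hav⟩ := hres s hs
    have h1 : 0 ≤ ⟪a - ξ, y s - z⟫ := hmono _ _ _ _ ha hξ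
    have h2 : 0 ≤ lam s * ⟪a - ξ, y s - z⟫ := mul_nonneg (hpos s hs).le h1
    have hav' : lam s • a = x s - y s := hav
    have h3 : lam s * ⟪a - ξ, y s - z⟫
        = ⟪x s - y s, y s - z⟫ - lam s * ⟪ξ, y s - z⟫ := by
      rw [← real_inner_smul_left, smul_sub, hav', inner_sub_left, real_inner_smul_left]
    have h4 : ⟪x s - y s, y s - z⟫
        = ⟪x s - y s, x s - z⟫ - ‖y s - x s‖ ^ 2 := by
      rw [show y s - z = (x s - z) - (x s - y s) by abel, inner_sub_right,
        ← real_inner_self_eq_norm_sq]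
      congr 1
      rw [show x s - y s = -(y s - x s) by abel, inner_neg_neg]
    have h5 : ⟪y s - x s, x s - z⟫ = -⟪x s - y s, x s - z⟫ := by
      rw [show y s - x s = -(x s - y s) by abel, inner_neg_left]
    linarith

  -- integral bound for part (a)
  have main : ∀ z ξ : H, ξ ∈ A z → ∀ t : ℝ, 0 ≤ t →
      ∫ s in (0:ℝ)..t, lam s * ⟪ξ, y s - z⟫ ≤ ‖x 0 - z‖ ^ 2 / 2 := by
    intro z ξ hξ t ht
    refine cl_aux_bound x y z _ hderiv ?_ (fun s hs => ?_) ht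
    · exact hlamc.mul (continuousOn_const.inner (hyc.sub continuousOn_const))
    · have h := key z ξ hξ s hs
      nlinarith [sq_nonneg ‖y s - x s‖]
  -- energy bound
  have ebound : ∀ t : ℝ, 0 ≤ t →
      ∫ s in (0:ℝ)..t, ‖y s - x s‖ ^ 2 ≤ ‖x 0 - zs‖ ^ 2 / 2 := by
    intro t ht
    refine cl_aux_bound x y zs _ hderiv ?_ (fun s hs => ?_) ht
    · exact hymx.norm.pow 2
    · have h := key zs 0 hzs s hs
      simpa using h
  -- interval integrability of lam
  have hlami : ∀ u : ℝ, 0 ≤ u → IntervalIntegrable lam MeasureTheory.volume 0 u := fun u hu =>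
    (hlamc.mono (by rw [uIcc_of_le hu]; exact Icc_subset_Ici_self)).intervalIntegrable
  -- part (a)
  have parta : ∀ z ξ : H, ξ ∈ A z → ∀ t : ℝ, 0 < t →
      ⟪ξ, ((∫ s in (0 : ℝ)..t, lam s)⁻¹ • ∫ s in (0 : ℝ)..t, lam s • y s) - z⟫
        ≤ ‖x 0 - z‖ ^ 2 / (2 * ∫ s in (0 : ℝ)..t, lam s) := by
    intro z ξ hξ t ht
    set L : ℝ := ∫ s in (0:ℝ)..t, lam s with hLdef
    have hLpos : 0 < L := intervalIntegral.intervalIntegral_pos_of_pos_on (hlami t ht.le)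
      (fun s hs => hpos s hs.1.le) ht
    have hsmul_int : IntervalIntegrable (fun s => lam s • y s) MeasureTheory.volume 0 t :=
      ((hlamc.smul hyc).mono (by rw [uIcc_of_le ht.le]; exact Icc_subset_Ici_self)).intervalIntegrable
    have hinter : ⟪ξ, ∫ s in (0:ℝ)..t, lam s • y s⟫ = ∫ s in (0:ℝ)..t, lam s * ⟪ξ, y s⟫ := by
      have h := (innerSL ℝ ξ).intervalIntegral_comp_comm hsmul_int
      simpa [real_inner_smul_right] using h.symm
    have hi1 : IntervalIntegrable (fun s => lam s * ⟪ξ, y s⟫) MeasureTheory.volume 0 t :=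
      ((hlamc.mul (continuousOn_const.inner hyc)).mono
        (by rw [uIcc_of_le ht.le]; exact Icc_subset_Ici_self)).intervalIntegrable
    have hi2 : IntervalIntegrable (fun s => lam s * ⟪ξ, z⟫) MeasureTheory.volume 0 t :=
      (hlami t ht.le).mul_const _
    have hsplit : ∫ s in (0:ℝ)..t, lam s * ⟪ξ, y s - z⟫
        = (∫ s in (0:ℝ)..t, lam s * ⟪ξ, y s⟫) - L * ⟪ξ, z⟫ := by
      have hconst : ∫ s in (0:ℝ)..t, lam s * ⟪ξ, z⟫ = L * ⟪ξ, z⟫ := by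
        rw [hLdef, ← intervalIntegral.integral_mul_const]
      rw [← hconst, ← intervalIntegral.integral_sub hi1 hi2]
      congr 1
      funext s
      rw [inner_sub_right]
      ring
    have expand : ⟪ξ, (L⁻¹ • ∫ s in (0:ℝ)..t, lam s • y s) - z⟫
        = L⁻¹ * ∫ s in (0:ℝ)..t, lam s * ⟪ξ, y s - z⟫ := by
      rw [inner_sub_right, real_inner_smul_right, hinter, hsplit, mul_sub, ← mul_assoc,
        inv_mul_cancel₀ hLpos.ne', one_mul]
    rw [expand]
    calc L⁻¹ * ∫ s in (0:ℝ)..t, lam s * ⟪ξ, y s - z⟫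
        ≤ L⁻¹ * (‖x 0 - z‖ ^ 2 / 2) :=
          mul_le_mul_of_nonneg_left (main z ξ hξ t ht.le) (inv_nonneg.2 hLpos.le)
      _ = ‖x 0 - z‖ ^ 2 / (2 * L) := by
          rw [inv_mul_eq_div, div_div]
  refine ⟨parta, ?_⟩

  -- part (b)
  obtain ⟨R, hR⟩ := isBounded_iff_forall_norm_le.1 hbdd
  have hR0 : 0 ≤ R := le_trans (norm_nonneg zs) (hR zs ⟨0, hzs⟩)
  set B : ℝ := (‖x 0‖ + R) ^ 2 with hBdef
  have hB0 : 0 ≤ B := by positivity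
  have hB : ∀ z ξ : H, ξ ∈ A z → ‖x 0 - z‖ ^ 2 ≤ B := by
    intro z ξ hξ
    have hz : ‖z‖ ≤ R := hR z ⟨ξ, hξ⟩
    have h1 : ‖x 0 - z‖ ≤ ‖x 0‖ + R := (norm_sub_le _ _).trans (by linarith)
    exact pow_le_pow_left₀ (norm_nonneg _) h1 2
  set E' : ℝ := max (‖x 0 - zs‖ ^ 2 / 2) 1 with hE'def
  have hE'1 : (1:ℝ) ≤ E' := le_max_right _ _
  have hE'0 : (0:ℝ) < E' := lt_of_lt_of_le one_pos hE'1
  set q : ℝ := ((p:ℝ) - 1) / 2 with hqdef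
  have hp1R : (1:ℝ) ≤ (p:ℝ) := by exact_mod_cast hp
  have hq0 : 0 ≤ q := div_nonneg (by linarith) (by norm_num)
  -- lower bound for lam
  have lamlb : ∀ t : ℝ, 0 < t → θ / (E' / t) ^ q ≤ lam t := by
    intro t ht
    rcases eq_or_lt_of_le hp with hp1 | hp2
    · have hp1' : p = 1 := hp1.symm
      have hlamt : lam t = θ := by
        have h := heq t ht.le
        rw [hp1'] at h
        simpa using h
      have hq : q = 0 := by rw [hqdef, hp1']; norm_num
      rw [hq, Real.rpow_zero, div_one, hlamt]
    · have hp2' : (2:ℝ) ≤ (p:ℝ) := by exact_mod_cast hp2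
      have hpm1 : (0:ℝ) < (p:ℝ) - 1 := by linarith
      have hlt : 0 < lam t := hpos t ht.le
      set b : ℝ := θ / lam t with hbdefn
      have hb0 : 0 < b := div_pos hθ hlt
      set m : ℝ := b ^ ((2:ℝ) / ((p:ℝ) - 1)) with hmdef
      have hm0 : 0 < m := Real.rpow_pos_of_pos hb0 _
      have hmle : ∀ s ∈ Icc (0:ℝ) t, m ≤ ‖y s - x s‖ ^ 2 := by
        intro s hs
        have hs0 : (0:ℝ) ≤ s := hs.1
        have hlams : 0 < lam s := hpos s hs0
        have h1 : b ≤ ‖y s - x s‖ ^ (p - 1) := by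
          have he := heq s hs0
          have h2 : ‖y s - x s‖ ^ (p - 1) = θ / lam s := by
            rw [eq_div_iff hlams.ne', mul_comm]
            exact he
          rw [h2, hbdefn]
          exact div_le_div_of_nonneg_left hθ.le hlams (hlam hs0 ht.le hs.2)
        have hnn : (0:ℝ) ≤ ‖y s - x s‖ := norm_nonneg _
        have h3 : b ^ ((2:ℝ) / ((p:ℝ) - 1))
            ≤ ((‖y s - x s‖ ^ (p - 1) : ℝ)) ^ ((2:ℝ) / ((p:ℝ) - 1)) :=
          Real.rpow_le_rpow hb0.le h1 (by positivity)
        have h4 : ((‖y s - x s‖ ^ (p - 1) : ℝ)) ^ ((2:ℝ) / ((p:ℝ) - 1)) = ‖y s - x s‖ ^ 2 := by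
          rw [← Real.rpow_natCast ‖y s - x s‖ (p - 1), ← Real.rpow_mul hnn]
          have hcast : ((p - 1 : ℕ) : ℝ) = (p:ℝ) - 1 := by
            push_cast [Nat.cast_sub hp]
            ring
          rw [hcast, show ((p:ℝ) - 1) * ((2:ℝ) / ((p:ℝ) - 1)) = 2 by field_simp,
            show (2:ℝ) = ((2:ℕ):ℝ) by norm_num, Real.rpow_natCast]
        rw [hmdef]
        rw [h4] at h3
        exact h3
      have hint2 : IntervalIntegrable (fun s => ‖y s - x s‖ ^ 2) MeasureTheory.volume 0 t :=
        ((hymx.norm.pow 2).mono (by rw [uIcc_of_le ht.le]; exact Icc_subset_Ici_self)).intervalIntegrable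
      have h6 : t * m ≤ ∫ s in (0:ℝ)..t, ‖y s - x s‖ ^ 2 := by
        have h := intervalIntegral.integral_mono_on ht.le intervalIntegrable_const hint2 hmle
        simpa [smul_eq_mul] using h
      have h7 : t * m ≤ E' := le_trans (h6.trans (ebound t ht.le)) (le_max_left _ _)
      have h8 : m ≤ E' / t := by
        rw [le_div_iff₀ ht, mul_comm]
        exact h7
      have h9 : b ≤ (E' / t) ^ q := by
        have h10 : m ^ q = b := by
          rw [hmdef, ← Real.rpow_mul hb0.le, hqdef,
            show (2:ℝ) / ((p:ℝ) - 1) * (((p:ℝ) - 1) / 2) = 1 by field_simp, Real.rpow_one]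
        have h11 : m ^ q ≤ (E' / t) ^ q := Real.rpow_le_rpow hm0.le h8 hq0
        rwa [h10] at h11
      have hpow : 0 < (E' / t) ^ q := Real.rpow_pos_of_pos (div_pos hE'0 ht) q
      rw [div_le_iff₀ hpow, mul_comm]
      exact (div_le_iff₀ hlt).1 h9
  -- lower bound for the integral of lam
  set e : ℝ := ((p:ℝ) + 1) / 2 with hedef
  have hqe : q + 1 = e := by rw [hqdef, hedef]; ring
  set c : ℝ := θ / (E' ^ q * 2 ^ e) with hcdef
  have hc0 : 0 < c :=
    div_pos hθ (mul_pos (Real.rpow_pos_of_pos hE'0 q) (Real.rpow_pos_of_pos two_pos e))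
  have hLlb : ∀ t : ℝ, 0 < t → c * t ^ e ≤ ∫ s in (0:ℝ)..t, lam s := by
    intro t ht
    have ht2 : 0 < t / 2 := by linarith
    have int2 : IntervalIntegrable lam MeasureTheory.volume (t/2) t :=
      (hlamc.mono (by rw [uIcc_of_le (by linarith : t/2 ≤ t)]; exact fun s hs => le_trans ht2.le hs.1)).intervalIntegrable
    have hsplit : ∫ s in (0:ℝ)..t, lam s
        = (∫ s in (0:ℝ)..(t/2), lam s) + ∫ s in (t/2)..t, lam s :=
      (intervalIntegral.integral_add_adjacent_intervals (hlami (t/2) ht2.le) int2).symm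
    have h1 : 0 ≤ ∫ s in (0:ℝ)..(t/2), lam s :=
      intervalIntegral.integral_nonneg ht2.le (fun s hs => (hpos s hs.1).le)
    have h2 : (t / 2) * lam (t / 2) ≤ ∫ s in (t/2)..t, lam s := by
      have h := intervalIntegral.integral_mono_on (by linarith : t/2 ≤ t)
        intervalIntegrable_const int2
        (fun s hs => hlam ht2.le (le_trans ht2.le hs.1) hs.1)
      simpa [smul_eq_mul, show t - t/2 = t/2 by ring] using h
    have h3 : θ / (E' / (t/2)) ^ q ≤ lam (t/2) := lamlb (t/2) ht2
    have h4 : c * t ^ e ≤ (t/2) * lam (t/2) := by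
      have heqn : c * t ^ e = (t/2) * (θ / (E' / (t/2)) ^ q) := by
        have hA : (E' / (t/2)) ^ q = E' ^ q / (t/2) ^ q := Real.div_rpow hE'0.le ht2.le q
        have hC : t ^ e = (t/2) ^ e * 2 ^ e := by
          rw [← Real.mul_rpow ht2.le (by norm_num : (0:ℝ) ≤ 2)]
          congr 1
          ring
        have hBe : (t/2) ^ e = (t/2) ^ q * (t/2) := by
          rw [← hqe, Real.rpow_add_one ht2.ne']
        rw [hcdef, hA, hC, hBe]
        have hEq : (0:ℝ) < E' ^ q := Real.rpow_pos_of_pos hE'0 q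
        have h2e : (0:ℝ) < (2:ℝ) ^ e := Real.rpow_pos_of_pos two_pos e
        have htq : (0:ℝ) < (t/2) ^ q := Real.rpow_pos_of_pos ht2 q
        field_simp
      rw [heqn]
      exact mul_le_mul_of_nonneg_left h3 ht2.le
    calc c * t ^ e ≤ (t/2) * lam (t/2) := h4
      _ ≤ ∫ s in (t/2)..t, lam s := h2
      _ ≤ ∫ s in (0:ℝ)..t, lam s := by rw [hsplit]; linarith
  -- conclusion
  refine ⟨B / (2 * c) + 1, add_pos_of_nonneg_of_pos (div_nonneg hB0 (by linarith)) one_pos, ?_⟩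
  intro t ht
  have hLt : c * t ^ e ≤ ∫ s in (0:ℝ)..t, lam s := hLlb t ht
  have hte : 0 < t ^ e := Real.rpow_pos_of_pos ht e
  have hLpos : 0 < ∫ s in (0:ℝ)..t, lam s := lt_of_lt_of_le (by positivity) hLt
  have hgoal : -(((p:ℝ) + 1) / 2) = -e := by rw [hedef]
  rw [hgoal]
  apply Real.sSup_le
  · rintro r ⟨z, ξ, hξ, rfl⟩
    have h1 := parta z ξ hξ t ht
    have h2 : ‖x 0 - z‖ ^ 2 / (2 * ∫ s in (0:ℝ)..t, lam s) ≤ B / (2 * (c * t ^ e)) :=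
      div_le_div₀ hB0 (hB z ξ hξ) (by positivity) (by linarith)
    have h3 : B / (2 * (c * t ^ e)) = (B / (2 * c)) * t ^ (-e) := by
      rw [Real.rpow_neg ht.le, ← mul_assoc, ← div_div, div_eq_mul_inv]
    have h4 : (B / (2 * c)) * t ^ (-e) ≤ (B / (2 * c) + 1) * t ^ (-e) :=
      mul_le_mul_of_nonneg_right (by linarith) (Real.rpow_nonneg ht.le _)
    linarith
  · positivity
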